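/- For every $i\in\mathbb{Z}/2n\mathbb{Z}$ and every choice of the constant $\gamma_i\in F$, the operator identities $e_{i+1}b_i=b_ie_{i+1}$ and $e_{i-1}b_i=b_ie_{i-1}$ hold on $V_{l,x}$ and also on $V^*_{l,x}$. -/

import Mathlib

/- Common setup: the quantum affine algebra U_q(A^{(1)}_{2n-1}) acting on symmetric
tensor representations V_{l,x} and their duals, coideal operators b_i, tensor products,
and the K matrix, following Kusano-Okado. -/

noncomputable section
namespace AII

open scoped TensorProduct Classical
open Finset

/-- The base field F = ℚ(q). -/
abbrev F : Type := RatFunc ℚ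

/-- The quantum parameter q. -/
def qq : F := RatFunc.X

/-- Quantum integer [a] = (q^a - q^{-a})/(q - q⁻¹). -/
def qint (a : ℤ) : F := (qq ^ a - qq ^ (-a)) / (qq - qq⁻¹)

/-- Quantum factorial [a]!. -/
def qfact (a : ℕ) : F := ∏ k ∈ Finset.range a, qint (k + 1)

/-- Quantum binomial coefficient. -/
def qbinom (j p : ℕ) : F := qfact j / (qfact p * qfact (j - p))

instance (n : ℕ) [NeZero n] : NeZero (2 * n) := ⟨by have := NeZero.ne n; omega⟩

/-- Helper instance: zero of a tensor product (works around a stuck instance search). -/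
noncomputable instance {R M N : Type*} [CommSemiring R] [AddCommMonoid M] [Module R M]
    [AddCommMonoid N] [Module R N] : Zero (TensorProduct R M N) :=
  (inferInstance : AddCommMonoid (TensorProduct R M N)).toZero

/-- Index set ℤ/2n for nodes of the Dynkin diagram / entries of weight vectors. -/
abbrev Zn (n : ℕ) := ZMod (2 * n)

/-- Membership in B_l : all entries nonnegative and summing to l. -/
def inB (n : ℕ) [NeZero n] (l : ℕ) (α : Zn n → ℤ) : Prop :=
  (∀ i, 0 ≤ α i) ∧ (∑ i, α i) = (l : ℤ)

/-- The vector space V_{l} with basis indexed by B_l. -/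
abbrev V (n : ℕ) [NeZero n] (l : ℕ) := {α : Zn n → ℤ // inB n l α} →₀ F

/-- Basis vector v_α, with the convention that it is 0 if α ∉ B_l
(in particular if α has a negative entry). -/
def vB (n : ℕ) [NeZero n] (l : ℕ) (α : Zn n → ℤ) : V n l :=
  if h : inB n l α then Finsupp.single ⟨α, h⟩ 1 else 0

/-- Helper: the linear operator sending v_α ↦ c(α) • v_{sh(α)}. -/
def opOf (n : ℕ) [NeZero n] (l : ℕ) (c : (Zn n → ℤ) → F)
    (sh : (Zn n → ℤ) → (Zn n → ℤ)) : V n l →ₗ[F] V n l :=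
  Finsupp.lsum F fun a => LinearMap.toSpanSingleton F (V n l) (c a.1 • vB n l (sh a.1))

/-- The i-th standard unit vector e_i of ℤ^{2n}. -/
def eu (n : ℕ) [NeZero n] (i : Zn n) : Zn n → ℤ := fun j => if j = i then 1 else 0

/-- Chevalley generator e_i on V_{l,x}. -/
def eOp (n : ℕ) [NeZero n] (l : ℕ) (x : F) (i : Zn n) : V n l →ₗ[F] V n l :=
  opOf n l (fun α => (if i = 0 then x else 1) * qint (α (i + 1)))
    (fun α => α + eu n i - eu n (i + 1))

/-- Chevalley generator f_i on V_{l,x}. -/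
def fOp (n : ℕ) [NeZero n] (l : ℕ) (x : F) (i : Zn n) : V n l →ₗ[F] V n l :=
  opOf n l (fun α => (if i = 0 then x⁻¹ else 1) * qint (α i))
    (fun α => α - eu n i + eu n (i + 1))

/-- Cartan generator k_i on V_{l,x}. -/
def kOp (n : ℕ) [NeZero n] (l : ℕ) (i : Zn n) : V n l →ₗ[F] V n l :=
  opOf n l (fun α => qq ^ (α i - α (i + 1))) id

/-- Inverse Cartan generator k_i⁻¹ on V_{l,x}. -/
def kInvOp (n : ℕ) [NeZero n] (l : ℕ) (i : Zn n) : V n l →ₗ[F] V n l :=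
  opOf n l (fun α => qq ^ (-(α i - α (i + 1)))) id

/-- e_i on the dual representation V^*_{l,x}. -/
def eSOp (n : ℕ) [NeZero n] (l : ℕ) (x : F) (i : Zn n) : V n l →ₗ[F] V n l :=
  opOf n l (fun α => (if i = 0 then x else 1) * qint (α i))
    (fun α => α - eu n i + eu n (i + 1))

/-- f_i on the dual representation V^*_{l,x}. -/
def fSOp (n : ℕ) [NeZero n] (l : ℕ) (x : F) (i : Zn n) : V n l →ₗ[F] V n l :=
  opOf n l (fun α => (if i = 0 then x⁻¹ else 1) * qint (α (i + 1)))
    (fun α => α + eu n i - eu n (i + 1))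

/-- k_i on the dual representation V^*_{l,x}. -/
def kSOp (n : ℕ) [NeZero n] (l : ℕ) (i : Zn n) : V n l →ₗ[F] V n l :=
  opOf n l (fun α => qq ^ (-(α i - α (i + 1)))) id

/-- k_i⁻¹ on the dual representation V^*_{l,x}. -/
def kSInvOp (n : ℕ) [NeZero n] (l : ℕ) (i : Zn n) : V n l →ₗ[F] V n l :=
  opOf n l (fun α => qq ^ (α i - α (i + 1))) id

/-- The coideal generator b_i built from families of operators e, f, k⁻¹:
b_i = f_i + γ_i (e_{i+1}e_{i-1}e_i - q⁻¹(e_{i+1}e_ie_{i-1}+e_{i-1}e_ie_{i+1})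
  + q⁻²e_ie_{i-1}e_{i+1}) k_i⁻¹. -/
def bOf (n : ℕ) [NeZero n] {M : Type*} [AddCommMonoid M] [Module F M]
    (e f kinv : Zn n → (M →ₗ[F] M)) (γ : Zn n → F) (i : Zn n) : M →ₗ[F] M :=
  f i + γ i • ((e (i + 1) ∘ₗ e (i - 1) ∘ₗ e i
      + (-qq⁻¹) • (e (i + 1) ∘ₗ e i ∘ₗ e (i - 1) + e (i - 1) ∘ₗ e i ∘ₗ e (i + 1))
      + (qq ^ (-2 : ℤ)) • (e i ∘ₗ e (i - 1) ∘ₗ e (i + 1))) ∘ₗ kinv i)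

/-- b_i on V_{l,x}. -/
def bOp (n : ℕ) [NeZero n] (l : ℕ) (x : F) (γ : Zn n → F) (i : Zn n) :
    V n l →ₗ[F] V n l :=
  bOf n (fun j => eOp n l x j) (fun j => fOp n l x j) (fun j => kInvOp n l j) γ i

/-- b_i on V^*_{l,x}. -/
def bSOp (n : ℕ) [NeZero n] (l : ℕ) (x : F) (γ : Zn n → F) (i : Zn n) :
    V n l →ₗ[F] V n l :=
  bOf n (fun j => eSOp n l x j) (fun j => fSOp n l x j) (fun j => kSInvOp n l j) γ i

/-- Coproduct action of e: E = e ⊗ 1 + k ⊗ e. -/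
def coE {M N : Type*} [AddCommGroup M] [Module F M] [AddCommGroup N] [Module F N]
    (e1 k1 : M →ₗ[F] M) (e2 : N →ₗ[F] N) : M ⊗[F] N →ₗ[F] M ⊗[F] N :=
  TensorProduct.map e1 LinearMap.id + TensorProduct.map k1 e2

/-- Coproduct action of f: F = f ⊗ k⁻¹ + 1 ⊗ f. -/
def coF {M N : Type*} [AddCommGroup M] [Module F M] [AddCommGroup N] [Module F N]
    (f1 : M →ₗ[F] M) (kinv2 f2 : N →ₗ[F] N) : M ⊗[F] N →ₗ[F] M ⊗[F] N :=
  TensorProduct.map f1 kinv2 + TensorProduct.map LinearMap.id f2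

/-- Coproduct action of k^{±1}: K = k ⊗ k. -/
def coK {M N : Type*} [AddCommGroup M] [Module F M] [AddCommGroup N] [Module F N]
    (k1 : M →ₗ[F] M) (k2 : N →ₗ[F] N) : M ⊗[F] N →ₗ[F] M ⊗[F] N :=
  TensorProduct.map k1 k2

/-- A bundle of operator families (e_i, f_i, k_i, k_i⁻¹) on a module. -/
structure Ops (n : ℕ) [NeZero n] (M : Type*) [AddCommGroup M] [Module F M] where
  e : Zn n → M →ₗ[F] M
  f : Zn n → M →ₗ[F] M
  k : Zn n → M →ₗ[F] M
  kinv : Zn n → M →ₗ[F] M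

/-- The operator bundle of V_{l,x}. -/
def VOps (n : ℕ) [NeZero n] (l : ℕ) (x : F) : Ops n (V n l) :=
  ⟨fun i => eOp n l x i, fun i => fOp n l x i, fun i => kOp n l i, fun i => kInvOp n l i⟩

/-- The operator bundle of V^*_{l,x}. -/
def VSOps (n : ℕ) [NeZero n] (l : ℕ) (x : F) : Ops n (V n l) :=
  ⟨fun i => eSOp n l x i, fun i => fSOp n l x i, fun i => kSOp n l i, fun i => kSInvOp n l i⟩

/-- Coproduct operator bundle on a tensor product of two representations. -/
def tensorOps {n : ℕ} [NeZero n] {M N : Type*} [AddCommGroup M] [Module F M]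
    [AddCommGroup N] [Module F N] (A : Ops n M) (B : Ops n N) : Ops n (M ⊗[F] N) where
  e := fun i => coE (A.e i) (A.k i) (B.e i)
  f := fun i => coF (A.f i) (B.kinv i) (B.f i)
  k := fun i => coK (A.k i) (B.k i)
  kinv := fun i => coK (A.kinv i) (B.kinv i)

/-- R intertwines the bundles A and B: R ∘ a = a ∘ R for all generators. -/
def Intertwines {n : ℕ} [NeZero n] {M N : Type*} [AddCommGroup M] [Module F M]
    [AddCommGroup N] [Module F N] (A : Ops n M) (B : Ops n N) (R : M →ₗ[F] N) : Prop :=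
  ∀ i : Zn n, R ∘ₗ A.e i = B.e i ∘ₗ R ∧ R ∘ₗ A.f i = B.f i ∘ₗ R ∧
    R ∘ₗ A.k i = B.k i ∘ₗ R ∧ R ∘ₗ A.kinv i = B.kinv i ∘ₗ R

/-- E_i on V_{l,x} ⊗ V_{m,y}. -/
def tE (n : ℕ) [NeZero n] (l m : ℕ) (x y : F) (i : Zn n) :
    V n l ⊗[F] V n m →ₗ[F] V n l ⊗[F] V n m := (tensorOps (VOps n l x) (VOps n m y)).e i

/-- F_i on V_{l,x} ⊗ V_{m,y}. -/
def tF (n : ℕ) [NeZero n] (l m : ℕ) (x y : F) (i : Zn n) :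
    V n l ⊗[F] V n m →ₗ[F] V n l ⊗[F] V n m := (tensorOps (VOps n l x) (VOps n m y)).f i

/-- K_i on V_{l,x} ⊗ V_{m,y}. -/
def tK (n : ℕ) [NeZero n] (l m : ℕ) (x y : F) (i : Zn n) :
    V n l ⊗[F] V n m →ₗ[F] V n l ⊗[F] V n m := (tensorOps (VOps n l x) (VOps n m y)).k i

/-- K_i⁻¹ on V_{l,x} ⊗ V_{m,y}. -/
def tKInv (n : ℕ) [NeZero n] (l m : ℕ) (x y : F) (i : Zn n) :
    V n l ⊗[F] V n m →ₗ[F] V n l ⊗[F] V n m := (tensorOps (VOps n l x) (VOps n m y)).kinv i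

/-- B_i on V_{l,x} ⊗ V_{m,y}. -/
def tB (n : ℕ) [NeZero n] (l m : ℕ) (x y : F) (γ : Zn n → F) (i : Zn n) :
    V n l ⊗[F] V n m →ₗ[F] V n l ⊗[F] V n m :=
  bOf n (fun j => tE n l m x y j) (fun j => tF n l m x y j) (fun j => tKInv n l m x y j) γ i

/-- The entry permutation σ^{(ε)}: switches α_{i-1} and α_i whenever i ≡ ε (mod 2),
i.e. pairs {ε+2k-1, ε+2k}. -/
def sigmaPerm (n : ℕ) [NeZero n] (ε : ℕ) (j : Zn n) : Zn n :=
  if (j - (ε : Zn n)).val % 2 = 1 then j + 1 else j - 1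

/-- Action of σ^{(ε)} on entry vectors. -/
def sigmaAct (n : ℕ) [NeZero n] (ε : ℕ) (α : Zn n → ℤ) : Zn n → ℤ :=
  fun j => α (sigmaPerm n ε j)

/-- The coefficient of the K matrix:
x^{ε(α_1-α_{2n})} ∏_{j=ε,ε+2,…,ε+2n-2} (-q⁻¹γ_j)^{-∑_{i=ε+1}^{j} α_i}. -/
def Kcoef (n : ℕ) [NeZero n] (x : F) (γ : Zn n → F) (ε : ℕ) (α : Zn n → ℤ) : F :=
  x ^ ((ε : ℤ) * (α 1 - α 0)) *
    ∏ k ∈ Finset.range n,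
      (-qq⁻¹ * γ ((ε : Zn n) + 2 * (k : Zn n))) ^
        (-(∑ r ∈ Finset.range (2 * k), α ((ε : Zn n) + 1 + (r : Zn n))))

/-- The explicit K matrix K(x) : V_{l,x} → V^*_{l,x⁻¹},
v_α ↦ Kcoef(α) v^*_{σ^{(ε)}(α)}. -/
def Kmap (n : ℕ) [NeZero n] (l : ℕ) (x : F) (γ : Zn n → F) (ε : ℕ) :
    V n l →ₗ[F] V n l :=
  opOf n l (fun α => Kcoef n x γ ε α) (sigmaAct n ε)

/-- The simplified K matrix (for γ_j = -q): v_α ↦ x^{ε(α_1-α_{2n})} v^*_{σ^{(ε)}(α)}. -/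
def KmapS (n : ℕ) [NeZero n] (l : ℕ) (x : F) (ε : ℕ) : V n l →ₗ[F] V n l :=
  opOf n l (fun α => x ^ ((ε : ℤ) * (α 1 - α 0))) (sigmaAct n ε)

/-- Cartan matrix of A^{(1)}_{2n-1}: a_{ij} = 2δ_{ij} - δ_{i,j+1} - δ_{i,j-1}. -/
def cartan (n : ℕ) [NeZero n] (i j : Zn n) : ℤ :=
  (if i = j then 2 else 0) - (if i = j + 1 then 1 else 0) - (if i = j - 1 then 1 else 0)

/- ### sl2 representations U_l -/

/-- The (l+1)-dimensional irreducible U_q(sl_2)-module U_l. -/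
abbrev UL (l : ℕ) := {p : ℕ × ℕ // p.1 + p.2 = l} →₀ F

/-- Basis vector u_{(a,b)} of U_l, zero when out of range. -/
def uB (l : ℕ) (a b : ℤ) : UL l :=
  if h : 0 ≤ a ∧ 0 ≤ b ∧ a.toNat + b.toNat = l then Finsupp.single ⟨(a.toNat, b.toNat), h.2.2⟩ 1
  else 0

/-- Helper for sl2 operators. -/
def slOf (l : ℕ) (c : ℕ × ℕ → F) (sh : ℕ × ℕ → ℤ × ℤ) : UL l →ₗ[F] UL l :=
  Finsupp.lsum F fun a => LinearMap.toSpanSingleton F (UL l) (c a.1 • uB l (sh a.1).1 (sh a.1).2)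

/-- e on U_l : u_{(a,b)} ↦ [b]u_{(a+1,b-1)}. -/
def esl (l : ℕ) : UL l →ₗ[F] UL l :=
  slOf l (fun p => qint p.2) (fun p => ((p.1 : ℤ) + 1, (p.2 : ℤ) - 1))

/-- f on U_l : u_{(a,b)} ↦ [a]u_{(a-1,b+1)}. -/
def fsl (l : ℕ) : UL l →ₗ[F] UL l :=
  slOf l (fun p => qint p.1) (fun p => ((p.1 : ℤ) - 1, (p.2 : ℤ) + 1))

/-- k on U_l. -/
def ksl (l : ℕ) : UL l →ₗ[F] UL l :=
  slOf l (fun p => qq ^ ((p.1 : ℤ) - (p.2 : ℤ))) (fun p => ((p.1 : ℤ), (p.2 : ℤ)))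

/-- k⁻¹ on U_l. -/
def kslInv (l : ℕ) : UL l →ₗ[F] UL l :=
  slOf l (fun p => qq ^ (-((p.1 : ℤ) - (p.2 : ℤ)))) (fun p => ((p.1 : ℤ), (p.2 : ℤ)))

/-- The highest weight vector w^{(l,m)}_j of U_{l+m-2j} ⊂ U_l ⊗ U_m. -/
def wsl (l m j : ℕ) : UL l ⊗[F] UL m :=
  ∑ p ∈ Finset.range (j + 1),
    ((-1 : F) ^ p * qq ^ ((p : ℤ) * ((l : ℤ) - p + 1)) * qbinom j p) •
      (uB l ((l : ℤ) - p) p ⊗ₜ[F] uB m ((m : ℤ) - j + p) ((j : ℤ) - p))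

/- ### The U(I_•)-highest weight vectors of V_l ⊗ V_m -/

/-- The index t ∈ {1,…,n} (0-based, in Fin n) of the sl2-pair containing
the entry position i : the pairs are {2t-1, 2t}. -/
def pairIdx (n : ℕ) [NeZero n] (i : Zn n) : Fin n :=
  if i.val % 2 = 1 then Fin.ofNat n (i.val / 2 : ℕ) else Fin.ofNat n ((i.val + 2 * n - 2) / 2 : ℕ)

/-- The entry vector α with α_{2t-1} = l_t - p_t, α_{2t} = p_t. -/
def alphaOf (n : ℕ) [NeZero n] (bl : Fin n → ℤ) (p : Fin n → ℕ) : Zn n → ℤ :=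
  fun i => if i.val % 2 = 1 then bl (pairIdx n i) - p (pairIdx n i) else (p (pairIdx n i) : ℤ)

/-- The entry vector β with β_{2t-1} = m_t - j_t + p_t, β_{2t} = j_t - p_t. -/
def betaOf (n : ℕ) [NeZero n] (bm bj : Fin n → ℤ) (p : Fin n → ℕ) : Zn n → ℤ :=
  fun i => if i.val % 2 = 1 then bm (pairIdx n i) - bj (pairIdx n i) + p (pairIdx n i)
    else bj (pairIdx n i) - p (pairIdx n i)

/-- Admissibility of a triple (𝒍, 𝒎, 𝒋). -/
def adm (n : ℕ) [NeZero n] (l m : ℕ) (bl bm bj : Fin n → ℤ) : Prop :=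
  (∀ t, 0 ≤ bl t) ∧ (∀ t, 0 ≤ bm t) ∧ (∑ t, bl t) = (l : ℤ) ∧ (∑ t, bm t) = (m : ℤ) ∧
    (∀ t, 0 ≤ bj t ∧ bj t ≤ min (bl t) (bm t))

/-- The U(I_•)-highest weight vector 𝒘^{(𝒍,𝒎)}_𝒋 ∈ V_{l,1} ⊗ V_{m,1},
zero when the triple is not admissible. -/
def wbig (n : ℕ) [NeZero n] (l m : ℕ) (bl bm bj : Fin n → ℤ) : V n l ⊗[F] V n m :=
  if adm n l m bl bm bj then
    ∑ p ∈ Fintype.piFinset (fun t => Finset.range ((bj t).toNat + 1)),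
      (∏ t, ((-1 : F) ^ (p t) * qq ^ ((p t : ℤ) * (bl t - p t + 1)) * qbinom (bj t).toNat (p t))) •
        (vB n l (alphaOf n bl p) ⊗ₜ[F] vB n m (betaOf n bm bj p))
  else (0 : V n l ⊗[F] V n m)

/-- The s-th standard unit vector of ℤ^n. -/
def eun (n : ℕ) [NeZero n] (s : Fin n) : Fin n → ℤ := fun t => if t = s then 1 else 0

/-- The Dynkin index i = 2s ∈ ℤ/2n attached to s ∈ {1,…,n} (s 0-based in Fin n). -/
def iZ (n : ℕ) [NeZero n] (s : Fin n) : Zn n := ((2 * s.val + 2 : ℕ) : Zn n)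

/- ### Coefficients from Propositions 4.3–4.5 -/


def cD1 (n : ℕ) [NeZero n] (bl bm bj : Fin n → ℤ) (s : Fin n) : F := -(qq ^ (-(bj s) - bj (s+1) + bl s + bm (s+1) + 1) * qint (bj s))
def cD2 (n : ℕ) [NeZero n] (bl bm bj : Fin n → ℤ) (s : Fin n) : F := qint (bj s)
def cD3 (n : ℕ) [NeZero n] (bl bm bj : Fin n → ℤ) (s : Fin n) : F := -(qq ^ (-(bj s) - bj (s+1) + bl (s+1) + bm (s+1) + 1) * qint (bj (s+1)))
def cD4 (n : ℕ) [NeZero n] (bl bm bj : Fin n → ℤ) (s : Fin n) : F := qq ^ (-2 * bj s - 2 * bj (s+1) + bl s + bl (s+1) + 2 * bm (s+1) + 2) * qint (bj (s+1))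

def cB1 (n : ℕ) [NeZero n] (bl bm bj : Fin n → ℤ) (s : Fin n) : F := qq ^ (bj s - bj (s+1) - bm s + bm (s+1)) * qint (bl s - bj s)
def cB2 (n : ℕ) [NeZero n] (bl bm bj : Fin n → ℤ) (s : Fin n) : F := qint (bm s - bj s)
def cB3 (n : ℕ) [NeZero n] (bl bm bj : Fin n → ℤ) (s : Fin n) : F := -(qq ^ (bj s - bj (s+1) - bl s - bm s + bl (s+1) + bm (s+1)) * qint (bm s - bj s))
def cB4 (n : ℕ) [NeZero n] (bl bm bj : Fin n → ℤ) (s : Fin n) : F := -(qq ^ (2 * bj s - 2 * bj (s+1) - bl s - 2 * bm s + bl (s+1) + 2 * bm (s+1)) * qint (bl s - bj s))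

def cC1 (n : ℕ) [NeZero n] (bl bm bj : Fin n → ℤ) (s : Fin n) : F := -(qq ^ (-(bj s) + bj (s+1) + bl s - bl (s+1)) * qint (bm (s+1) - bj (s+1)))
def cC2 (n : ℕ) [NeZero n] (bl bm bj : Fin n → ℤ) (s : Fin n) : F := -qint (bl (s+1) - bj (s+1))
def cC3 (n : ℕ) [NeZero n] (bl bm bj : Fin n → ℤ) (s : Fin n) : F := qq ^ (-(bj s) + bj (s+1)) * qint (bl (s+1) - bj (s+1))
def cC4 (n : ℕ) [NeZero n] (bl bm bj : Fin n → ℤ) (s : Fin n) : F := qq ^ (-2 * bj s + 2 * bj (s+1) + bl s - bl (s+1)) * qint (bm (s+1) - bj (s+1))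

/-- The denominator N = [l_s+m_s-2j_s+1][l_{s+1}+m_{s+1}-2j_{s+1}+1]. -/
def cN (n : ℕ) [NeZero n] (bl bm bj : Fin n → ℤ) (s : Fin n) : F := qint (bl s + bm s - 2 * bj s + 1) * qint (bl (s+1) + bm (s+1) - 2 * bj (s+1) + 1)


/-- A_1 as a function of the six integers l_s, l_{s+1}, m_s, m_{s+1}, j_s, j_{s+1}. -/
def sA1 (ls ls1 ms ms1 js js1 : ℤ) : F :=
  qq ^ (js + js1 - ls1 - ms - 1) * qint (ls - js) * qint (ms1 - js1) * qint (ls + ms - js + 1)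
    / (qint (ls + ms - 2 * js + 1) * qint (ls1 + ms1 - 2 * js1 + 1))

def sA2 (ls ls1 ms ms1 js js1 : ℤ) : F :=
  -(qint (ls1 - js1) * qint (ms - js) * qint (ls + ms - js + 1))
    / (qint (ls + ms - 2 * js + 1) * qint (ls1 + ms1 - 2 * js1 + 1))

def sA3 (ls ls1 ms ms1 js js1 : ℤ) : F :=
  qq ^ (js + js1 - ls - ms - 1) * qint (ls1 - js1) * qint (ms - js) * qint (ls1 + ms1 - js1 + 1)
    / (qint (ls + ms - 2 * js + 1) * qint (ls1 + ms1 - 2 * js1 + 1))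

def sA4 (ls ls1 ms ms1 js js1 : ℤ) : F :=
  -(qq ^ (2 * js + 2 * js1 - ls - ls1 - 2 * ms - 2) * qint (ls - js) * qint (ms1 - js1)
      * qint (ls1 + ms1 - js1 + 1))
    / (qint (ls + ms - 2 * js + 1) * qint (ls1 + ms1 - 2 * js1 + 1))


def cA1 (n : ℕ) [NeZero n] (bl bm bj : Fin n → ℤ) (s : Fin n) : F := sA1 (bl s) (bl (s+1)) (bm s) (bm (s+1)) (bj s) (bj (s+1))
def cA2 (n : ℕ) [NeZero n] (bl bm bj : Fin n → ℤ) (s : Fin n) : F := sA2 (bl s) (bl (s+1)) (bm s) (bm (s+1)) (bj s) (bj (s+1))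
def cA3 (n : ℕ) [NeZero n] (bl bm bj : Fin n → ℤ) (s : Fin n) : F := sA3 (bl s) (bl (s+1)) (bm s) (bm (s+1)) (bj s) (bj (s+1))
def cA4 (n : ℕ) [NeZero n] (bl bm bj : Fin n → ℤ) (s : Fin n) : F := sA4 (bl s) (bl (s+1)) (bm s) (bm (s+1)) (bj s) (bj (s+1))

def cBB1 (n : ℕ) [NeZero n] (bl bm bj : Fin n → ℤ) (s : Fin n) : F := cB1 n bl bm bj s * qint (bl s + bm s - bj s + 1)
  * qint (bl (s+1) + bm (s+1) - 2 * bj (s+1)) / cN n bl bm bj s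
def cBB2 (n : ℕ) [NeZero n] (bl bm bj : Fin n → ℤ) (s : Fin n) : F := cB2 n bl bm bj s * qint (bl s + bm s - bj s + 1)
  * qint (bl (s+1) + bm (s+1) - 2 * bj (s+1)) / cN n bl bm bj s
def cBB3 (n : ℕ) [NeZero n] (bl bm bj : Fin n → ℤ) (s : Fin n) : F := cB3 n bl bm bj s * qint (bj (s+1))
  * qint (bl (s+1) + bm (s+1) - 2 * bj (s+1)) / cN n bl bm bj s
def cBB4 (n : ℕ) [NeZero n] (bl bm bj : Fin n → ℤ) (s : Fin n) : F := cB4 n bl bm bj s * qint (bj (s+1))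
  * qint (bl (s+1) + bm (s+1) - 2 * bj (s+1)) / cN n bl bm bj s

def cCC1 (n : ℕ) [NeZero n] (bl bm bj : Fin n → ℤ) (s : Fin n) : F := cC1 n bl bm bj s * qint (bj s) * qint (bl s + bm s - 2 * bj s) / cN n bl bm bj s
def cCC2 (n : ℕ) [NeZero n] (bl bm bj : Fin n → ℤ) (s : Fin n) : F := cC2 n bl bm bj s * qint (bj s) * qint (bl s + bm s - 2 * bj s) / cN n bl bm bj s
def cCC3 (n : ℕ) [NeZero n] (bl bm bj : Fin n → ℤ) (s : Fin n) : F := cC3 n bl bm bj s * qint (bl s + bm s - 2 * bj s)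
  * qint (bl (s+1) + bm (s+1) - bj (s+1) + 1) / cN n bl bm bj s
def cCC4 (n : ℕ) [NeZero n] (bl bm bj : Fin n → ℤ) (s : Fin n) : F := cC4 n bl bm bj s * qint (bl s + bm s - 2 * bj s)
  * qint (bl (s+1) + bm (s+1) - bj (s+1) + 1) / cN n bl bm bj s

def cDD1 (n : ℕ) [NeZero n] (bl bm bj : Fin n → ℤ) (s : Fin n) : F := cD1 n bl bm bj s * qint (bl s + bm s - 2 * bj s)
  * qint (bl (s+1) + bm (s+1) - 2 * bj (s+1)) / cN n bl bm bj s
def cDD2 (n : ℕ) [NeZero n] (bl bm bj : Fin n → ℤ) (s : Fin n) : F := cD2 n bl bm bj s * qint (bl s + bm s - 2 * bj s)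
  * qint (bl (s+1) + bm (s+1) - 2 * bj (s+1)) / cN n bl bm bj s
def cDD3 (n : ℕ) [NeZero n] (bl bm bj : Fin n → ℤ) (s : Fin n) : F := cD3 n bl bm bj s * qint (bl s + bm s - 2 * bj s)
  * qint (bl (s+1) + bm (s+1) - 2 * bj (s+1)) / cN n bl bm bj s
def cDD4 (n : ℕ) [NeZero n] (bl bm bj : Fin n → ℤ) (s : Fin n) : F := cD4 n bl bm bj s * qint (bl s + bm s - 2 * bj s)
  * qint (bl (s+1) + bm (s+1) - 2 * bj (s+1)) / cN n bl bm bj s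


/-- The entry of the matrix C of Proposition 4.8, for row data (s, 𝒍, 𝒎, 𝒋)
and column data (𝒍', 𝒎', 𝒋'). -/
def Centry (n : ℕ) [NeZero n] (s : Fin n) (bl bm bj bl' bm' bj' : Fin n → ℤ) : F :=
  if bl' = bl - eun n s + eun n (s + 1) ∧ bm' = bm ∧ bj' = bj + eun n (s + 1) then
    cA1 n bl bm bj s
  else if bl' = bl ∧ bm' = bm - eun n s + eun n (s + 1) ∧ bj' = bj + eun n (s + 1) then
    cA2 n bl bm bj s
  else if bl' = bl + eun n s - eun n (s + 1) ∧ bm' = bm ∧ bj' = bj + eun n s then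
    cA3 n bl bm bj s
  else if bl' = bl ∧ bm' = bm + eun n s - eun n (s + 1) ∧ bj' = bj + eun n s then
    cA4 n bl bm bj s
  else 0

/-- f ∈ ℚ(q) is regular at q = 0 and vanishes there (i.e. f ∈ qA). -/
def vanishesAt0 (f : F) : Prop :=
  ∃ a b : Polynomial ℚ, Polynomial.eval 0 b ≠ 0 ∧ Polynomial.eval 0 a = 0 ∧
    f = algebraMap (Polynomial ℚ) F a / algebraMap (Polynomial ℚ) F b


/-! ### Auxiliary lemmas for statement1 -/

lemma hq0 : qq ≠ 0 := RatFunc.X_ne_zero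

lemma qint_zero : qint 0 = 0 := by simp [qint]

lemma hqd : qq - qq⁻¹ ≠ 0 := by
  intro h
  have h2 : qq * qq = 1 := by
    have hh := sub_eq_zero.mp h
    calc qq * qq = qq * qq⁻¹ := by rw [← hh]
    _ = 1 := mul_inv_cancel₀ hq0
  have h3 : (Polynomial.X : Polynomial ℚ) * Polynomial.X = 1 := by
    apply IsFractionRing.injective (Polynomial ℚ) F
    simpa [qq, RatFunc.algebraMap_X] using h2
  have h4 := congrArg (Polynomial.eval 0) h3
  simp at h4

section Aux
variable {n l : ℕ} [NeZero n] {α : Zn n → ℤ}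

lemma vB_neg (h : ¬ inB n l α) : vB n l α = 0 := dif_neg h

lemma opOf_vB (c : (Zn n → ℤ) → F) (sh : (Zn n → ℤ) → (Zn n → ℤ)) (α : Zn n → ℤ) :
    opOf n l c sh (vB n l α) = if inB n l α then c α • vB n l (sh α) else 0 := by
  by_cases h : inB n l α
  · rw [if_pos h, show vB n l α = Finsupp.single ⟨α, h⟩ 1 from dif_pos h]
    unfold opOf
    rw [Finsupp.lsum_single]
    simp [LinearMap.toSpanSingleton_apply]
  · rw [if_neg h, vB_neg h, map_zero]

lemma opStep (c : (Zn n → ℤ) → F) (sh : (Zn n → ℤ) → (Zn n → ℤ))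
    (hgood : ∀ β, inB n l β → ¬ inB n l (sh β) → c β = 0)
    {t : F} {β : Zn n → ℤ} (hflag : inB n l β ∨ t = 0) :
    opOf n l c sh (t • vB n l β) = (t * c β) • vB n l (sh β)
      ∧ (inB n l (sh β) ∨ t * c β = 0) := by
  rcases hflag with h | h
  · refine ⟨?_, ?_⟩
    · rw [map_smul, opOf_vB, if_pos h, smul_smul]
    · by_cases h2 : inB n l (sh β)
      · exact Or.inl h2
      · exact Or.inr (by rw [hgood β h h2, mul_zero])
  · subst h; simp

lemma eu_sum (j : Zn n) : ∑ k, eu n j k = 1 := by simp [eu]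

lemma eu_apply (j k : Zn n) : eu n j k = if k = j then 1 else 0 := rfl

lemma inB_add_sub {j j' : Zn n} (hjj : j ≠ j') (hα : inB n l α) :
    inB n l (α + eu n j - eu n j') ↔ 1 ≤ α j' := by
  have hsum : ∑ k, (α + eu n j - eu n j') k = (l : ℤ) := by
    simp [Finset.sum_sub_distrib, Finset.sum_add_distrib, eu_sum, hα.2]
  constructor
  · intro h
    have := h.1 j'
    simp [eu, hjj.symm] at this
    omega
  · intro h
    refine ⟨fun k => ?_, hsum⟩
    have h0 := hα.1 k
    by_cases h2 : k = j
    · subst h2; simp only [Pi.add_apply, Pi.sub_apply, eu, if_pos rfl, if_neg hjj]; omega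
    · by_cases h1 : k = j'
      · subst h1; simp only [Pi.add_apply, Pi.sub_apply, eu, if_pos rfl, if_neg h2]; omega
      · simp only [Pi.add_apply, Pi.sub_apply, eu, if_neg h1, if_neg h2]; omega

lemma inB_sub_add {j j' : Zn n} (hjj : j ≠ j') (hα : inB n l α) :
    inB n l (α - eu n j + eu n j') ↔ 1 ≤ α j := by
  have hsum : ∑ k, (α - eu n j + eu n j') k = (l : ℤ) := by
    simp [Finset.sum_sub_distrib, Finset.sum_add_distrib, eu_sum, hα.2]
  constructor
  · intro h
    have := h.1 j
    simp [eu, hjj] at this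
    omega
  · intro h
    refine ⟨fun k => ?_, hsum⟩
    have h0 := hα.1 k
    by_cases h2 : k = j
    · subst h2; simp only [Pi.sub_apply, Pi.add_apply, eu, if_pos rfl, if_neg hjj]; omega
    · by_cases h1 : k = j'
      · subst h1; simp only [Pi.sub_apply, Pi.add_apply, eu, if_pos rfl, if_neg h2]; omega
      · simp only [Pi.sub_apply, Pi.add_apply, eu, if_neg h1, if_neg h2]; omega

lemma eStep (x : F) (j : Zn n) (hone : (1 : Zn n) ≠ 0) {t : F} {β : Zn n → ℤ}
    (hflag : inB n l β ∨ t = 0) :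
    eOp n l x j (t • vB n l β)
      = (t * ((if j = 0 then x else 1) * qint (β (j + 1)))) • vB n l (β + eu n j - eu n (j + 1))
    ∧ (inB n l (β + eu n j - eu n (j + 1))
        ∨ t * ((if j = 0 then x else 1) * qint (β (j + 1))) = 0) := by
  refine opStep _ _ (fun β' hβ' hns => ?_) hflag
  have hne : j ≠ j + 1 := fun h => hone (left_eq_add.mp h)
  have h1 : ¬ 1 ≤ β' (j + 1) := fun hh => hns ((inB_add_sub hne hβ').mpr hh)
  have h2 : β' (j + 1) = 0 := le_antisymm (by omega) (hβ'.1 _)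
  rw [h2, qint_zero, mul_zero]

lemma fStep (x : F) (j : Zn n) (hone : (1 : Zn n) ≠ 0) {t : F} {β : Zn n → ℤ}
    (hflag : inB n l β ∨ t = 0) :
    fOp n l x j (t • vB n l β)
      = (t * ((if j = 0 then x⁻¹ else 1) * qint (β j))) • vB n l (β - eu n j + eu n (j + 1))
    ∧ (inB n l (β - eu n j + eu n (j + 1))
        ∨ t * ((if j = 0 then x⁻¹ else 1) * qint (β j)) = 0) := by
  refine opStep _ _ (fun β' hβ' hns => ?_) hflag
  have hne : j ≠ j + 1 := fun h => hone (left_eq_add.mp h)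
  have h1 : ¬ 1 ≤ β' j := fun hh => hns ((inB_sub_add hne hβ').mpr hh)
  have h2 : β' j = 0 := le_antisymm (by omega) (hβ'.1 _)
  rw [h2, qint_zero, mul_zero]

lemma kInvStep (j : Zn n) {t : F} {β : Zn n → ℤ} (hflag : inB n l β ∨ t = 0) :
    kInvOp n l j (t • vB n l β)
      = (t * qq ^ (-(β j - β (j + 1)))) • vB n l β
    ∧ (inB n l β ∨ t * qq ^ (-(β j - β (j + 1))) = 0) := by
  refine opStep _ _ (fun β' hβ' hns => absurd hβ' hns) hflag

lemma eSStep (x : F) (j : Zn n) (hone : (1 : Zn n) ≠ 0) {t : F} {β : Zn n → ℤ}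
    (hflag : inB n l β ∨ t = 0) :
    eSOp n l x j (t • vB n l β)
      = (t * ((if j = 0 then x else 1) * qint (β j))) • vB n l (β - eu n j + eu n (j + 1))
    ∧ (inB n l (β - eu n j + eu n (j + 1))
        ∨ t * ((if j = 0 then x else 1) * qint (β j)) = 0) := by
  refine opStep _ _ (fun β' hβ' hns => ?_) hflag
  have hne : j ≠ j + 1 := fun h => hone (left_eq_add.mp h)
  have h1 : ¬ 1 ≤ β' j := fun hh => hns ((inB_sub_add hne hβ').mpr hh)
  have h2 : β' j = 0 := le_antisymm (by omega) (hβ'.1 _)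
  rw [h2, qint_zero, mul_zero]

lemma fSStep (x : F) (j : Zn n) (hone : (1 : Zn n) ≠ 0) {t : F} {β : Zn n → ℤ}
    (hflag : inB n l β ∨ t = 0) :
    fSOp n l x j (t • vB n l β)
      = (t * ((if j = 0 then x⁻¹ else 1) * qint (β (j + 1)))) • vB n l (β + eu n j - eu n (j + 1))
    ∧ (inB n l (β + eu n j - eu n (j + 1))
        ∨ t * ((if j = 0 then x⁻¹ else 1) * qint (β (j + 1))) = 0) := by
  refine opStep _ _ (fun β' hβ' hns => ?_) hflag
  have hne : j ≠ j + 1 := fun h => hone (left_eq_add.mp h)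
  have h1 : ¬ 1 ≤ β' (j + 1) := fun hh => hns ((inB_add_sub hne hβ').mpr hh)
  have h2 : β' (j + 1) = 0 := le_antisymm (by omega) (hβ'.1 _)
  rw [h2, qint_zero, mul_zero]

lemma kSInvStep (j : Zn n) {t : F} {β : Zn n → ℤ} (hflag : inB n l β ∨ t = 0) :
    kSInvOp n l j (t • vB n l β)
      = (t * qq ^ (β j - β (j + 1))) • vB n l β
    ∧ (inB n l β ∨ t * qq ^ (β j - β (j + 1)) = 0) := by
  refine opStep _ _ (fun β' hβ' hns => absurd hβ' hns) hflag

lemma comm_of_basis {f g : V n l →ₗ[F] V n l}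
    (h : ∀ α, inB n l α → f (vB n l α) = g (vB n l α)) : f = g := by
  refine Finsupp.lhom_ext fun a b => ?_
  obtain ⟨α, hα⟩ := a
  have h1 : (Finsupp.single (⟨α, hα⟩ : {β : Zn n → ℤ // inB n l β}) b) = b • vB n l α := by
    rw [vB, dif_pos hα, Finsupp.smul_single, smul_eq_mul, mul_one]
  rw [h1, map_smul, map_smul, h α hα]

lemma addCong {a b c d : V n l} (h1 : a = c) (h2 : b = d) : a + b = c + d := by
  rw [h1, h2]

lemma smulCong {v : V n l} {s t : F} (h : s = t) : s • v = t • v := by rw [h]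


lemma LA (m : ℤ) : qint (m + 1) - qq⁻¹ * qint m = qq ^ m := by
  rw [qint, qint, ← mul_div_assoc, div_sub_div_same, div_eq_iff hqd]
  simp only [zpow_add₀ hq0, zpow_sub₀ hq0, zpow_neg, zpow_one, mul_inv, inv_inv, inv_div]
  ring

lemma LB (m : ℤ) : qint m - qq⁻¹ * qint (m + 1) = -qq ^ (-m - 1) := by
  rw [qint, qint, ← mul_div_assoc, div_sub_div_same, div_eq_iff hqd]
  simp only [zpow_add₀ hq0, zpow_sub₀ hq0, zpow_neg, zpow_one, mul_inv, inv_inv, inv_div]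
  linear_combination (-(qq ^ m - (qq ^ m)⁻¹)) * mul_inv_cancel₀ hq0

lemma LA' (m : ℤ) : qint m - qq⁻¹ * qint (m - 1) = qq ^ (m - 1) := by
  rw [qint, qint, ← mul_div_assoc, div_sub_div_same, div_eq_iff hqd]
  simp only [zpow_add₀ hq0, zpow_sub₀ hq0, zpow_neg, zpow_one, mul_inv, inv_inv, inv_div]
  linear_combination (-(qq ^ m - (qq ^ m)⁻¹)) * mul_inv_cancel₀ hq0

lemma midQ3 (e1 e2 e3 f1 f2 f3 : ℤ) (h : e1 + e2 + e3 = f1 + f2 + f3) (Z : F) :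
    qq ^ e1 * (qq ^ e2 * (qq ^ e3 * Z)) = qq ^ f1 * (qq ^ f2 * (qq ^ f3 * Z)) := by
  have key : ∀ (a b c : ℤ) (W : F), qq ^ a * (qq ^ b * (qq ^ c * W)) = qq ^ (a + b + c) * W := by
    intro a b c W
    rw [zpow_add₀ hq0, zpow_add₀ hq0]
    ring
  rw [key, key, h]

end Aux

set_option maxHeartbeats 1000000 in
lemma commP1 (n l : ℕ) [NeZero n] (hn : 2 ≤ n) (x : F) (γ : Zn n → F) (i : Zn n) :
    eOp n l x (i + 1) ∘ₗ bOp n l x γ i = bOp n l x γ i ∘ₗ eOp n l x (i + 1) := by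
  apply comm_of_basis
  intro α hα
  have hcast : ∀ k : ℕ, 0 < k → k < 2 * n → ((k : ℕ) : Zn n) ≠ 0 := by
    intro k h0 hk h
    rw [ZMod.natCast_eq_zero_iff] at h
    exact absurd (Nat.le_of_dvd h0 h) (by omega)
  have hone : (1 : Zn n) ≠ 0 := by simpa using hcast 1 (by norm_num) (by omega)
  have htwo : (2 : Zn n) ≠ 0 := by simpa using hcast 2 (by norm_num) (by omega)
  have hthree : (3 : Zn n) ≠ 0 := by simpa using hcast 3 (by norm_num) (by omega)
  have hplus : i + 1 + 1 = i + 2 := by ring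
  have hminus : i - 1 + 1 = i := by ring
  have hm2 : qq ^ (-2 : ℤ) = qq⁻¹ * qq⁻¹ := by
    rw [show (-2 : ℤ) = -1 + -1 from by norm_num, zpow_add₀ hq0, zpow_neg_one]
  have nf_m1_0 : (i - 1) ≠ i := fun h => hone (by linear_combination -h)
  have nf_0_m1 : i ≠ (i - 1) := fun h => hone (by linear_combination h)
  have nf_m1_1 : (i - 1) ≠ (i + 1) := fun h => htwo (by linear_combination -h)
  have nf_1_m1 : (i + 1) ≠ (i - 1) := fun h => htwo (by linear_combination h)
  have nf_m1_2 : (i - 1) ≠ (i + 2) := fun h => hthree (by linear_combination -h)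
  have nf_2_m1 : (i + 2) ≠ (i - 1) := fun h => hthree (by linear_combination h)
  have nf_0_1 : i ≠ (i + 1) := fun h => hone (by linear_combination -h)
  have nf_1_0 : (i + 1) ≠ i := fun h => hone (by linear_combination h)
  have nf_0_2 : i ≠ (i + 2) := fun h => htwo (by linear_combination -h)
  have nf_2_0 : (i + 2) ≠ i := fun h => htwo (by linear_combination h)
  have nf_1_2 : (i + 1) ≠ (i + 2) := fun h => hone (by linear_combination -h)
  have nf_2_1 : (i + 2) ≠ (i + 1) := fun h => hone (by linear_combination h)
  simp only [bOp, bOf, LinearMap.add_apply, LinearMap.comp_apply, LinearMap.smul_apply,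
    map_add, map_smul]
  refine addCong ?_ (congrArg (fun z => γ i • z) ?_)
  rw [← one_smul F (vB n l α)]
  have s0 := fStep x i hone (t := 1) (β := α) (Or.inl hα)
  have s1 := eStep x (i + 1) hone s0.2
  have s2 := eStep x (i + 1) hone (t := 1) (β := α) (Or.inl hα)
  have s3 := fStep x i hone s2.2
  rw [s0.1, s1.1, s2.1, s3.1]
  simp only [hminus, hplus]
  simp only [Pi.add_apply, Pi.sub_apply, eu_apply, nf_m1_0, nf_0_m1, nf_m1_1, nf_1_m1, nf_m1_2, nf_2_m1, nf_0_1, nf_1_0, nf_0_2, nf_2_0, nf_1_2, nf_2_1,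
    eq_self_iff_true, if_true, if_false, add_zero, sub_zero]
  rw [show α - eu n i + eu n (i + 1) + eu n (i + 1) - eu n (i + 2) = α + eu n (i + 1) + eu n (i + 1) - eu n (i + 2) - eu n i from by abel,
    show α + eu n (i + 1) - eu n (i + 2) - eu n i + eu n (i + 1) = α + eu n (i + 1) + eu n (i + 1) - eu n (i + 2) - eu n i from by abel]
  apply smulCong
  ring
  rw [← one_smul F (vB n l α)]
  have s100 := kInvStep i (t := 1) (β := α) (Or.inl hα)
  have s101 := eStep x i hone s100.2
  have s102 := eStep x (i - 1) hone s101.2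
  have s103 := eStep x (i + 1) hone s102.2
  have s104 := eStep x (i + 1) hone s103.2
  have s105 := eStep x (i - 1) hone s100.2
  have s106 := eStep x i hone s105.2
  have s107 := eStep x (i + 1) hone s106.2
  have s108 := eStep x (i + 1) hone s107.2
  have s109 := eStep x (i + 1) hone s100.2
  have s110 := eStep x i hone s109.2
  have s111 := eStep x (i - 1) hone s110.2
  have s112 := eStep x (i + 1) hone s111.2
  have s113 := eStep x (i - 1) hone s109.2
  have s114 := eStep x i hone s113.2
  have s115 := eStep x (i + 1) hone s114.2
  have s116 := eStep x (i + 1) hone (t := 1) (β := α) (Or.inl hα)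
  have s117 := kInvStep i s116.2
  have s118 := eStep x i hone s117.2
  have s119 := eStep x (i - 1) hone s118.2
  have s120 := eStep x (i + 1) hone s119.2
  have s121 := eStep x (i - 1) hone s117.2
  have s122 := eStep x i hone s121.2
  have s123 := eStep x (i + 1) hone s122.2
  have s124 := eStep x (i + 1) hone s117.2
  have s125 := eStep x i hone s124.2
  have s126 := eStep x (i - 1) hone s125.2
  have s127 := eStep x (i - 1) hone s124.2
  have s128 := eStep x i hone s127.2
  rw [s100.1, s101.1, s102.1, s103.1, s104.1, s105.1, s106.1, s107.1, s108.1, s109.1, s110.1, s111.1, s112.1, s113.1, s114.1, s115.1, s116.1, s117.1, s118.1, s119.1, s120.1, s121.1, s122.1, s123.1, s124.1, s125.1, s126.1, s127.1, s128.1]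
  simp only [hminus, hplus]
  simp only [Pi.add_apply, Pi.sub_apply, eu_apply, nf_m1_0, nf_0_m1, nf_m1_1, nf_1_m1, nf_m1_2, nf_2_m1, nf_0_1, nf_1_0, nf_0_2, nf_2_0, nf_1_2, nf_2_1,
    eq_self_iff_true, if_true, if_false, add_zero, sub_zero]
  rw [show α + eu n i - eu n (i + 1) + eu n (i - 1) - eu n i + eu n (i + 1) - eu n (i + 2) + eu n (i + 1) - eu n (i + 2) = α + eu n (i + 1) + eu n (i + 1) + eu n (i - 1) + eu n i - eu n (i + 1) - eu n (i + 2) - eu n (i + 2) - eu n i from by abel,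
    show α + eu n (i - 1) - eu n i + eu n i - eu n (i + 1) + eu n (i + 1) - eu n (i + 2) + eu n (i + 1) - eu n (i + 2) = α + eu n (i + 1) + eu n (i + 1) + eu n (i - 1) + eu n i - eu n (i + 1) - eu n (i + 2) - eu n (i + 2) - eu n i from by abel,
    show α + eu n (i + 1) - eu n (i + 2) + eu n i - eu n (i + 1) + eu n (i - 1) - eu n i + eu n (i + 1) - eu n (i + 2) = α + eu n (i + 1) + eu n (i + 1) + eu n (i - 1) + eu n i - eu n (i + 1) - eu n (i + 2) - eu n (i + 2) - eu n i from by abel,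
    show α + eu n (i + 1) - eu n (i + 2) + eu n (i - 1) - eu n i + eu n i - eu n (i + 1) + eu n (i + 1) - eu n (i + 2) = α + eu n (i + 1) + eu n (i + 1) + eu n (i - 1) + eu n i - eu n (i + 1) - eu n (i + 2) - eu n (i + 2) - eu n i from by abel,
    show α + eu n (i + 1) - eu n (i + 2) + eu n (i + 1) - eu n (i + 2) + eu n i - eu n (i + 1) + eu n (i - 1) - eu n i = α + eu n (i + 1) + eu n (i + 1) + eu n (i - 1) + eu n i - eu n (i + 1) - eu n (i + 2) - eu n (i + 2) - eu n i from by abel,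
    show α + eu n (i + 1) - eu n (i + 2) + eu n (i + 1) - eu n (i + 2) + eu n (i - 1) - eu n i + eu n i - eu n (i + 1) = α + eu n (i + 1) + eu n (i + 1) + eu n (i - 1) + eu n i - eu n (i + 1) - eu n (i + 2) - eu n (i + 2) - eu n i from by abel]
  simp only [smul_add, smul_smul, ← add_smul]
  apply smulCong
  rw [hm2]
  trans qq ^ (-(α i - α (i + 1))) * ((if i = 0 then x else 1) * (if i - 1 = 0 then x else 1) * (if i + 1 = 0 then x else 1) * (if i + 1 = 0 then x else 1)) * (qint (α (i + 2)) * qint (α (i + 2) - 1)) * ((qint (α (i + 1)) - qq⁻¹ * qint (α (i + 1) + 1)) * (qint (α i + 1) - qq⁻¹ * qint (α i)))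
  · ring
  trans qq ^ (-(α i - (α (i + 1) + 1))) * ((if i = 0 then x else 1) * (if i - 1 = 0 then x else 1) * (if i + 1 = 0 then x else 1) * (if i + 1 = 0 then x else 1)) * (qint (α (i + 2)) * qint (α (i + 2) - 1)) * ((qint (α (i + 1) + 1) - qq⁻¹ * qint (α (i + 1) + 1 + 1)) * (qint (α i + 1) - qq⁻¹ * qint (α i)))
  · rw [LB (α (i + 1)), LB (α (i + 1) + 1), LA (α i)]
    trans qq ^ (-(α i - α (i + 1))) * (qq ^ (-(α (i + 1)) - 1) * (qq ^ (α i) * (-(((if i = 0 then x else 1) * (if i - 1 = 0 then x else 1) * (if i + 1 = 0 then x else 1) * (if i + 1 = 0 then x else 1)) * (qint (α (i + 2)) * qint (α (i + 2) - 1))))))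
    · ring
    trans qq ^ (-(α i - (α (i + 1) + 1))) * (qq ^ (-(α (i + 1) + 1) - 1) * (qq ^ (α i) * (-(((if i = 0 then x else 1) * (if i - 1 = 0 then x else 1) * (if i + 1 = 0 then x else 1) * (if i + 1 = 0 then x else 1)) * (qint (α (i + 2)) * qint (α (i + 2) - 1))))))
    · exact midQ3 _ _ _ _ _ _ (by ring) _
    · ring
  · ring

set_option maxHeartbeats 1000000 in
lemma commP2 (n l : ℕ) [NeZero n] (hn : 2 ≤ n) (x : F) (γ : Zn n → F) (i : Zn n) :
    eOp n l x (i - 1) ∘ₗ bOp n l x γ i = bOp n l x γ i ∘ₗ eOp n l x (i - 1) := by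
  apply comm_of_basis
  intro α hα
  have hcast : ∀ k : ℕ, 0 < k → k < 2 * n → ((k : ℕ) : Zn n) ≠ 0 := by
    intro k h0 hk h
    rw [ZMod.natCast_eq_zero_iff] at h
    exact absurd (Nat.le_of_dvd h0 h) (by omega)
  have hone : (1 : Zn n) ≠ 0 := by simpa using hcast 1 (by norm_num) (by omega)
  have htwo : (2 : Zn n) ≠ 0 := by simpa using hcast 2 (by norm_num) (by omega)
  have hthree : (3 : Zn n) ≠ 0 := by simpa using hcast 3 (by norm_num) (by omega)
  have hplus : i + 1 + 1 = i + 2 := by ring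
  have hminus : i - 1 + 1 = i := by ring
  have hm2 : qq ^ (-2 : ℤ) = qq⁻¹ * qq⁻¹ := by
    rw [show (-2 : ℤ) = -1 + -1 from by norm_num, zpow_add₀ hq0, zpow_neg_one]
  have nf_m1_0 : (i - 1) ≠ i := fun h => hone (by linear_combination -h)
  have nf_0_m1 : i ≠ (i - 1) := fun h => hone (by linear_combination h)
  have nf_m1_1 : (i - 1) ≠ (i + 1) := fun h => htwo (by linear_combination -h)
  have nf_1_m1 : (i + 1) ≠ (i - 1) := fun h => htwo (by linear_combination h)
  have nf_m1_2 : (i - 1) ≠ (i + 2) := fun h => hthree (by linear_combination -h)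
  have nf_2_m1 : (i + 2) ≠ (i - 1) := fun h => hthree (by linear_combination h)
  have nf_0_1 : i ≠ (i + 1) := fun h => hone (by linear_combination -h)
  have nf_1_0 : (i + 1) ≠ i := fun h => hone (by linear_combination h)
  have nf_0_2 : i ≠ (i + 2) := fun h => htwo (by linear_combination -h)
  have nf_2_0 : (i + 2) ≠ i := fun h => htwo (by linear_combination h)
  have nf_1_2 : (i + 1) ≠ (i + 2) := fun h => hone (by linear_combination -h)
  have nf_2_1 : (i + 2) ≠ (i + 1) := fun h => hone (by linear_combination h)
  simp only [bOp, bOf, LinearMap.add_apply, LinearMap.comp_apply, LinearMap.smul_apply,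
    map_add, map_smul]
  refine addCong ?_ (congrArg (fun z => γ i • z) ?_)
  rw [← one_smul F (vB n l α)]
  have s0 := fStep x i hone (t := 1) (β := α) (Or.inl hα)
  have s1 := eStep x (i - 1) hone s0.2
  have s2 := eStep x (i - 1) hone (t := 1) (β := α) (Or.inl hα)
  have s3 := fStep x i hone s2.2
  rw [s0.1, s1.1, s2.1, s3.1]
  simp only [hminus, hplus]
  simp only [Pi.add_apply, Pi.sub_apply, eu_apply, nf_m1_0, nf_0_m1, nf_m1_1, nf_1_m1, nf_m1_2, nf_2_m1, nf_0_1, nf_1_0, nf_0_2, nf_2_0, nf_1_2, nf_2_1,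
    eq_self_iff_true, if_true, if_false, add_zero, sub_zero]
  rw [show α - eu n i + eu n (i + 1) + eu n (i - 1) - eu n i = α + eu n (i + 1) + eu n (i - 1) - eu n i - eu n i from by abel,
    show α + eu n (i - 1) - eu n i - eu n i + eu n (i + 1) = α + eu n (i + 1) + eu n (i - 1) - eu n i - eu n i from by abel]
  apply smulCong
  ring
  rw [← one_smul F (vB n l α)]
  have s100 := kInvStep i (t := 1) (β := α) (Or.inl hα)
  have s101 := eStep x i hone s100.2
  have s102 := eStep x (i - 1) hone s101.2
  have s103 := eStep x (i + 1) hone s102.2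
  have s104 := eStep x (i - 1) hone s103.2
  have s105 := eStep x (i - 1) hone s100.2
  have s106 := eStep x i hone s105.2
  have s107 := eStep x (i + 1) hone s106.2
  have s108 := eStep x (i - 1) hone s107.2
  have s109 := eStep x (i + 1) hone s100.2
  have s110 := eStep x i hone s109.2
  have s111 := eStep x (i - 1) hone s110.2
  have s112 := eStep x (i - 1) hone s111.2
  have s113 := eStep x (i - 1) hone s109.2
  have s114 := eStep x i hone s113.2
  have s115 := eStep x (i - 1) hone s114.2
  have s116 := eStep x (i - 1) hone (t := 1) (β := α) (Or.inl hα)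
  have s117 := kInvStep i s116.2
  have s118 := eStep x i hone s117.2
  have s119 := eStep x (i - 1) hone s118.2
  have s120 := eStep x (i + 1) hone s119.2
  have s121 := eStep x (i - 1) hone s117.2
  have s122 := eStep x i hone s121.2
  have s123 := eStep x (i + 1) hone s122.2
  have s124 := eStep x (i + 1) hone s117.2
  have s125 := eStep x i hone s124.2
  have s126 := eStep x (i - 1) hone s125.2
  have s127 := eStep x (i - 1) hone s124.2
  have s128 := eStep x i hone s127.2
  rw [s100.1, s101.1, s102.1, s103.1, s104.1, s105.1, s106.1, s107.1, s108.1, s109.1, s110.1, s111.1, s112.1, s113.1, s114.1, s115.1, s116.1, s117.1, s118.1, s119.1, s120.1, s121.1, s122.1, s123.1, s124.1, s125.1, s126.1, s127.1, s128.1]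
  simp only [hminus, hplus]
  simp only [Pi.add_apply, Pi.sub_apply, eu_apply, nf_m1_0, nf_0_m1, nf_m1_1, nf_1_m1, nf_m1_2, nf_2_m1, nf_0_1, nf_1_0, nf_0_2, nf_2_0, nf_1_2, nf_2_1,
    eq_self_iff_true, if_true, if_false, add_zero, sub_zero]
  rw [show (α i + 1 - 1 : ℤ) = α i from by ring,
    show (α i - 1 + 1 : ℤ) = α i from by ring]
  rw [show α + eu n i - eu n (i + 1) + eu n (i - 1) - eu n i + eu n (i + 1) - eu n (i + 2) + eu n (i - 1) - eu n i = α + eu n (i + 1) + eu n (i - 1) + eu n (i - 1) + eu n i - eu n (i + 1) - eu n (i + 2) - eu n i - eu n i from by abel,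
    show α + eu n (i - 1) - eu n i + eu n i - eu n (i + 1) + eu n (i + 1) - eu n (i + 2) + eu n (i - 1) - eu n i = α + eu n (i + 1) + eu n (i - 1) + eu n (i - 1) + eu n i - eu n (i + 1) - eu n (i + 2) - eu n i - eu n i from by abel,
    show α + eu n (i + 1) - eu n (i + 2) + eu n i - eu n (i + 1) + eu n (i - 1) - eu n i + eu n (i - 1) - eu n i = α + eu n (i + 1) + eu n (i - 1) + eu n (i - 1) + eu n i - eu n (i + 1) - eu n (i + 2) - eu n i - eu n i from by abel,
    show α + eu n (i + 1) - eu n (i + 2) + eu n (i - 1) - eu n i + eu n i - eu n (i + 1) + eu n (i - 1) - eu n i = α + eu n (i + 1) + eu n (i - 1) + eu n (i - 1) + eu n i - eu n (i + 1) - eu n (i + 2) - eu n i - eu n i from by abel,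
    show α + eu n (i - 1) - eu n i + eu n i - eu n (i + 1) + eu n (i - 1) - eu n i + eu n (i + 1) - eu n (i + 2) = α + eu n (i + 1) + eu n (i - 1) + eu n (i - 1) + eu n i - eu n (i + 1) - eu n (i + 2) - eu n i - eu n i from by abel,
    show α + eu n (i - 1) - eu n i + eu n (i - 1) - eu n i + eu n i - eu n (i + 1) + eu n (i + 1) - eu n (i + 2) = α + eu n (i + 1) + eu n (i - 1) + eu n (i - 1) + eu n i - eu n (i + 1) - eu n (i + 2) - eu n i - eu n i from by abel,
    show α + eu n (i - 1) - eu n i + eu n (i + 1) - eu n (i + 2) + eu n i - eu n (i + 1) + eu n (i - 1) - eu n i = α + eu n (i + 1) + eu n (i - 1) + eu n (i - 1) + eu n i - eu n (i + 1) - eu n (i + 2) - eu n i - eu n i from by abel,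
    show α + eu n (i - 1) - eu n i + eu n (i + 1) - eu n (i + 2) + eu n (i - 1) - eu n i + eu n i - eu n (i + 1) = α + eu n (i + 1) + eu n (i - 1) + eu n (i - 1) + eu n i - eu n (i + 1) - eu n (i + 2) - eu n i - eu n i from by abel]
  simp only [smul_add, smul_smul, ← add_smul]
  apply smulCong
  rw [hm2]
  trans qq ^ (-(α i - α (i + 1))) * ((if i = 0 then x else 1) * (if i - 1 = 0 then x else 1) * (if i - 1 = 0 then x else 1) * (if i + 1 = 0 then x else 1)) * (qint (α (i + 2)) * qint (α i)) * ((qint (α (i + 1)) - qq⁻¹ * qint (α (i + 1) + 1)) * (qint (α i + 1) - qq⁻¹ * qint (α i)))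
  · ring
  trans qq ^ (-(α i - 1 - α (i + 1))) * ((if i = 0 then x else 1) * (if i - 1 = 0 then x else 1) * (if i - 1 = 0 then x else 1) * (if i + 1 = 0 then x else 1)) * (qint (α (i + 2)) * qint (α i)) * ((qint (α (i + 1)) - qq⁻¹ * qint (α (i + 1) + 1)) * (qint (α i) - qq⁻¹ * qint (α i - 1)))
  · rw [LB (α (i + 1)), LA (α i), LA' (α i)]
    trans qq ^ (-(α i - α (i + 1))) * (qq ^ (-(α (i + 1)) - 1) * (qq ^ (α i) * (-(((if i = 0 then x else 1) * (if i - 1 = 0 then x else 1) * (if i - 1 = 0 then x else 1) * (if i + 1 = 0 then x else 1)) * (qint (α (i + 2)) * qint (α i))))))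
    · ring
    trans qq ^ (-(α i - 1 - α (i + 1))) * (qq ^ (-(α (i + 1)) - 1) * (qq ^ (α i - 1) * (-(((if i = 0 then x else 1) * (if i - 1 = 0 then x else 1) * (if i - 1 = 0 then x else 1) * (if i + 1 = 0 then x else 1)) * (qint (α (i + 2)) * qint (α i))))))
    · exact midQ3 _ _ _ _ _ _ (by ring) _
    · ring
  · ring

set_option maxHeartbeats 1000000 in
lemma commS1 (n l : ℕ) [NeZero n] (hn : 2 ≤ n) (x : F) (γ : Zn n → F) (i : Zn n) :
    eSOp n l x (i + 1) ∘ₗ bSOp n l x γ i = bSOp n l x γ i ∘ₗ eSOp n l x (i + 1) := by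
  apply comm_of_basis
  intro α hα
  have hcast : ∀ k : ℕ, 0 < k → k < 2 * n → ((k : ℕ) : Zn n) ≠ 0 := by
    intro k h0 hk h
    rw [ZMod.natCast_eq_zero_iff] at h
    exact absurd (Nat.le_of_dvd h0 h) (by omega)
  have hone : (1 : Zn n) ≠ 0 := by simpa using hcast 1 (by norm_num) (by omega)
  have htwo : (2 : Zn n) ≠ 0 := by simpa using hcast 2 (by norm_num) (by omega)
  have hthree : (3 : Zn n) ≠ 0 := by simpa using hcast 3 (by norm_num) (by omega)
  have hplus : i + 1 + 1 = i + 2 := by ring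
  have hminus : i - 1 + 1 = i := by ring
  have hm2 : qq ^ (-2 : ℤ) = qq⁻¹ * qq⁻¹ := by
    rw [show (-2 : ℤ) = -1 + -1 from by norm_num, zpow_add₀ hq0, zpow_neg_one]
  have nf_m1_0 : (i - 1) ≠ i := fun h => hone (by linear_combination -h)
  have nf_0_m1 : i ≠ (i - 1) := fun h => hone (by linear_combination h)
  have nf_m1_1 : (i - 1) ≠ (i + 1) := fun h => htwo (by linear_combination -h)
  have nf_1_m1 : (i + 1) ≠ (i - 1) := fun h => htwo (by linear_combination h)
  have nf_m1_2 : (i - 1) ≠ (i + 2) := fun h => hthree (by linear_combination -h)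
  have nf_2_m1 : (i + 2) ≠ (i - 1) := fun h => hthree (by linear_combination h)
  have nf_0_1 : i ≠ (i + 1) := fun h => hone (by linear_combination -h)
  have nf_1_0 : (i + 1) ≠ i := fun h => hone (by linear_combination h)
  have nf_0_2 : i ≠ (i + 2) := fun h => htwo (by linear_combination -h)
  have nf_2_0 : (i + 2) ≠ i := fun h => htwo (by linear_combination h)
  have nf_1_2 : (i + 1) ≠ (i + 2) := fun h => hone (by linear_combination -h)
  have nf_2_1 : (i + 2) ≠ (i + 1) := fun h => hone (by linear_combination h)
  simp only [bSOp, bOf, LinearMap.add_apply, LinearMap.comp_apply, LinearMap.smul_apply,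
    map_add, map_smul]
  refine addCong ?_ (congrArg (fun z => γ i • z) ?_)
  rw [← one_smul F (vB n l α)]
  have s0 := fSStep x i hone (t := 1) (β := α) (Or.inl hα)
  have s1 := eSStep x (i + 1) hone s0.2
  have s2 := eSStep x (i + 1) hone (t := 1) (β := α) (Or.inl hα)
  have s3 := fSStep x i hone s2.2
  rw [s0.1, s1.1, s2.1, s3.1]
  simp only [hminus, hplus]
  simp only [Pi.add_apply, Pi.sub_apply, eu_apply, nf_m1_0, nf_0_m1, nf_m1_1, nf_1_m1, nf_m1_2, nf_2_m1, nf_0_1, nf_1_0, nf_0_2, nf_2_0, nf_1_2, nf_2_1,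
    eq_self_iff_true, if_true, if_false, add_zero, sub_zero]
  rw [show α + eu n i - eu n (i + 1) - eu n (i + 1) + eu n (i + 2) = α + eu n (i + 2) + eu n i - eu n (i + 1) - eu n (i + 1) from by abel,
    show α - eu n (i + 1) + eu n (i + 2) + eu n i - eu n (i + 1) = α + eu n (i + 2) + eu n i - eu n (i + 1) - eu n (i + 1) from by abel]
  apply smulCong
  ring
  rw [← one_smul F (vB n l α)]
  have s100 := kSInvStep i (t := 1) (β := α) (Or.inl hα)
  have s101 := eSStep x i hone s100.2
  have s102 := eSStep x (i - 1) hone s101.2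
  have s103 := eSStep x (i + 1) hone s102.2
  have s104 := eSStep x (i + 1) hone s103.2
  have s105 := eSStep x (i - 1) hone s100.2
  have s106 := eSStep x i hone s105.2
  have s107 := eSStep x (i + 1) hone s106.2
  have s108 := eSStep x (i + 1) hone s107.2
  have s109 := eSStep x (i + 1) hone s100.2
  have s110 := eSStep x i hone s109.2
  have s111 := eSStep x (i - 1) hone s110.2
  have s112 := eSStep x (i + 1) hone s111.2
  have s113 := eSStep x (i - 1) hone s109.2
  have s114 := eSStep x i hone s113.2
  have s115 := eSStep x (i + 1) hone s114.2
  have s116 := eSStep x (i + 1) hone (t := 1) (β := α) (Or.inl hα)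
  have s117 := kSInvStep i s116.2
  have s118 := eSStep x i hone s117.2
  have s119 := eSStep x (i - 1) hone s118.2
  have s120 := eSStep x (i + 1) hone s119.2
  have s121 := eSStep x (i - 1) hone s117.2
  have s122 := eSStep x i hone s121.2
  have s123 := eSStep x (i + 1) hone s122.2
  have s124 := eSStep x (i + 1) hone s117.2
  have s125 := eSStep x i hone s124.2
  have s126 := eSStep x (i - 1) hone s125.2
  have s127 := eSStep x (i - 1) hone s124.2
  have s128 := eSStep x i hone s127.2
  rw [s100.1, s101.1, s102.1, s103.1, s104.1, s105.1, s106.1, s107.1, s108.1, s109.1, s110.1, s111.1, s112.1, s113.1, s114.1, s115.1, s116.1, s117.1, s118.1, s119.1, s120.1, s121.1, s122.1, s123.1, s124.1, s125.1, s126.1, s127.1, s128.1]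
  simp only [hminus, hplus]
  simp only [Pi.add_apply, Pi.sub_apply, eu_apply, nf_m1_0, nf_0_m1, nf_m1_1, nf_1_m1, nf_m1_2, nf_2_m1, nf_0_1, nf_1_0, nf_0_2, nf_2_0, nf_1_2, nf_2_1,
    eq_self_iff_true, if_true, if_false, add_zero, sub_zero]
  rw [show (α (i + 1) + 1 - 1 : ℤ) = α (i + 1) from by ring,
    show (α (i + 1) - 1 + 1 : ℤ) = α (i + 1) from by ring]
  rw [show α - eu n i + eu n (i + 1) - eu n (i - 1) + eu n i - eu n (i + 1) + eu n (i + 2) - eu n (i + 1) + eu n (i + 2) = α + eu n (i + 1) + eu n (i + 2) + eu n (i + 2) + eu n i - eu n (i + 1) - eu n (i + 1) - eu n (i - 1) - eu n i from by abel,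
    show α - eu n (i - 1) + eu n i - eu n i + eu n (i + 1) - eu n (i + 1) + eu n (i + 2) - eu n (i + 1) + eu n (i + 2) = α + eu n (i + 1) + eu n (i + 2) + eu n (i + 2) + eu n i - eu n (i + 1) - eu n (i + 1) - eu n (i - 1) - eu n i from by abel,
    show α - eu n (i + 1) + eu n (i + 2) - eu n i + eu n (i + 1) - eu n (i - 1) + eu n i - eu n (i + 1) + eu n (i + 2) = α + eu n (i + 1) + eu n (i + 2) + eu n (i + 2) + eu n i - eu n (i + 1) - eu n (i + 1) - eu n (i - 1) - eu n i from by abel,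
    show α - eu n (i + 1) + eu n (i + 2) - eu n (i - 1) + eu n i - eu n i + eu n (i + 1) - eu n (i + 1) + eu n (i + 2) = α + eu n (i + 1) + eu n (i + 2) + eu n (i + 2) + eu n i - eu n (i + 1) - eu n (i + 1) - eu n (i - 1) - eu n i from by abel,
    show α - eu n (i + 1) + eu n (i + 2) - eu n (i + 1) + eu n (i + 2) - eu n i + eu n (i + 1) - eu n (i - 1) + eu n i = α + eu n (i + 1) + eu n (i + 2) + eu n (i + 2) + eu n i - eu n (i + 1) - eu n (i + 1) - eu n (i - 1) - eu n i from by abel,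
    show α - eu n (i + 1) + eu n (i + 2) - eu n (i + 1) + eu n (i + 2) - eu n (i - 1) + eu n i - eu n i + eu n (i + 1) = α + eu n (i + 1) + eu n (i + 2) + eu n (i + 2) + eu n i - eu n (i + 1) - eu n (i + 1) - eu n (i - 1) - eu n i from by abel]
  simp only [smul_add, smul_smul, ← add_smul]
  apply smulCong
  rw [hm2]
  trans qq ^ (α i - α (i + 1)) * ((if i = 0 then x else 1) * (if i - 1 = 0 then x else 1) * (if i + 1 = 0 then x else 1) * (if i + 1 = 0 then x else 1)) * (qint (α (i - 1)) * qint (α (i + 1))) * ((qint (α (i + 1) + 1) - qq⁻¹ * qint (α (i + 1))) * (qint (α i) - qq⁻¹ * qint (α i + 1)))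
  · ring
  trans qq ^ (α i - (α (i + 1) - 1)) * ((if i = 0 then x else 1) * (if i - 1 = 0 then x else 1) * (if i + 1 = 0 then x else 1) * (if i + 1 = 0 then x else 1)) * (qint (α (i - 1)) * qint (α (i + 1))) * ((qint (α (i + 1)) - qq⁻¹ * qint (α (i + 1) - 1)) * (qint (α i) - qq⁻¹ * qint (α i + 1)))
  · rw [LA (α (i + 1)), LA' (α (i + 1)), LB (α i)]
    trans qq ^ (α i - α (i + 1)) * (qq ^ (α (i + 1)) * (qq ^ (-(α i) - 1) * (-(((if i = 0 then x else 1) * (if i - 1 = 0 then x else 1) * (if i + 1 = 0 then x else 1) * (if i + 1 = 0 then x else 1)) * (qint (α (i - 1)) * qint (α (i + 1)))))))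
    · ring
    trans qq ^ (α i - (α (i + 1) - 1)) * (qq ^ (α (i + 1) - 1) * (qq ^ (-(α i) - 1) * (-(((if i = 0 then x else 1) * (if i - 1 = 0 then x else 1) * (if i + 1 = 0 then x else 1) * (if i + 1 = 0 then x else 1)) * (qint (α (i - 1)) * qint (α (i + 1)))))))
    · exact midQ3 _ _ _ _ _ _ (by ring) _
    · ring
  · ring

set_option maxHeartbeats 1000000 in
lemma commS2 (n l : ℕ) [NeZero n] (hn : 2 ≤ n) (x : F) (γ : Zn n → F) (i : Zn n) :
    eSOp n l x (i - 1) ∘ₗ bSOp n l x γ i = bSOp n l x γ i ∘ₗ eSOp n l x (i - 1) := by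
  apply comm_of_basis
  intro α hα
  have hcast : ∀ k : ℕ, 0 < k → k < 2 * n → ((k : ℕ) : Zn n) ≠ 0 := by
    intro k h0 hk h
    rw [ZMod.natCast_eq_zero_iff] at h
    exact absurd (Nat.le_of_dvd h0 h) (by omega)
  have hone : (1 : Zn n) ≠ 0 := by simpa using hcast 1 (by norm_num) (by omega)
  have htwo : (2 : Zn n) ≠ 0 := by simpa using hcast 2 (by norm_num) (by omega)
  have hthree : (3 : Zn n) ≠ 0 := by simpa using hcast 3 (by norm_num) (by omega)
  have hplus : i + 1 + 1 = i + 2 := by ring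
  have hminus : i - 1 + 1 = i := by ring
  have hm2 : qq ^ (-2 : ℤ) = qq⁻¹ * qq⁻¹ := by
    rw [show (-2 : ℤ) = -1 + -1 from by norm_num, zpow_add₀ hq0, zpow_neg_one]
  have nf_m1_0 : (i - 1) ≠ i := fun h => hone (by linear_combination -h)
  have nf_0_m1 : i ≠ (i - 1) := fun h => hone (by linear_combination h)
  have nf_m1_1 : (i - 1) ≠ (i + 1) := fun h => htwo (by linear_combination -h)
  have nf_1_m1 : (i + 1) ≠ (i - 1) := fun h => htwo (by linear_combination h)
  have nf_m1_2 : (i - 1) ≠ (i + 2) := fun h => hthree (by linear_combination -h)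
  have nf_2_m1 : (i + 2) ≠ (i - 1) := fun h => hthree (by linear_combination h)
  have nf_0_1 : i ≠ (i + 1) := fun h => hone (by linear_combination -h)
  have nf_1_0 : (i + 1) ≠ i := fun h => hone (by linear_combination h)
  have nf_0_2 : i ≠ (i + 2) := fun h => htwo (by linear_combination -h)
  have nf_2_0 : (i + 2) ≠ i := fun h => htwo (by linear_combination h)
  have nf_1_2 : (i + 1) ≠ (i + 2) := fun h => hone (by linear_combination -h)
  have nf_2_1 : (i + 2) ≠ (i + 1) := fun h => hone (by linear_combination h)
  simp only [bSOp, bOf, LinearMap.add_apply, LinearMap.comp_apply, LinearMap.smul_apply,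
    map_add, map_smul]
  refine addCong ?_ (congrArg (fun z => γ i • z) ?_)
  rw [← one_smul F (vB n l α)]
  have s0 := fSStep x i hone (t := 1) (β := α) (Or.inl hα)
  have s1 := eSStep x (i - 1) hone s0.2
  have s2 := eSStep x (i - 1) hone (t := 1) (β := α) (Or.inl hα)
  have s3 := fSStep x i hone s2.2
  rw [s0.1, s1.1, s2.1, s3.1]
  simp only [hminus, hplus]
  simp only [Pi.add_apply, Pi.sub_apply, eu_apply, nf_m1_0, nf_0_m1, nf_m1_1, nf_1_m1, nf_m1_2, nf_2_m1, nf_0_1, nf_1_0, nf_0_2, nf_2_0, nf_1_2, nf_2_1,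
    eq_self_iff_true, if_true, if_false, add_zero, sub_zero]
  rw [show α + eu n i - eu n (i + 1) - eu n (i - 1) + eu n i = α + eu n i + eu n i - eu n (i + 1) - eu n (i - 1) from by abel,
    show α - eu n (i - 1) + eu n i + eu n i - eu n (i + 1) = α + eu n i + eu n i - eu n (i + 1) - eu n (i - 1) from by abel]
  apply smulCong
  ring
  rw [← one_smul F (vB n l α)]
  have s100 := kSInvStep i (t := 1) (β := α) (Or.inl hα)
  have s101 := eSStep x i hone s100.2
  have s102 := eSStep x (i - 1) hone s101.2
  have s103 := eSStep x (i + 1) hone s102.2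
  have s104 := eSStep x (i - 1) hone s103.2
  have s105 := eSStep x (i - 1) hone s100.2
  have s106 := eSStep x i hone s105.2
  have s107 := eSStep x (i + 1) hone s106.2
  have s108 := eSStep x (i - 1) hone s107.2
  have s109 := eSStep x (i + 1) hone s100.2
  have s110 := eSStep x i hone s109.2
  have s111 := eSStep x (i - 1) hone s110.2
  have s112 := eSStep x (i - 1) hone s111.2
  have s113 := eSStep x (i - 1) hone s109.2
  have s114 := eSStep x i hone s113.2
  have s115 := eSStep x (i - 1) hone s114.2
  have s116 := eSStep x (i - 1) hone (t := 1) (β := α) (Or.inl hα)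
  have s117 := kSInvStep i s116.2
  have s118 := eSStep x i hone s117.2
  have s119 := eSStep x (i - 1) hone s118.2
  have s120 := eSStep x (i + 1) hone s119.2
  have s121 := eSStep x (i - 1) hone s117.2
  have s122 := eSStep x i hone s121.2
  have s123 := eSStep x (i + 1) hone s122.2
  have s124 := eSStep x (i + 1) hone s117.2
  have s125 := eSStep x i hone s124.2
  have s126 := eSStep x (i - 1) hone s125.2
  have s127 := eSStep x (i - 1) hone s124.2
  have s128 := eSStep x i hone s127.2
  rw [s100.1, s101.1, s102.1, s103.1, s104.1, s105.1, s106.1, s107.1, s108.1, s109.1, s110.1, s111.1, s112.1, s113.1, s114.1, s115.1, s116.1, s117.1, s118.1, s119.1, s120.1, s121.1, s122.1, s123.1, s124.1, s125.1, s126.1, s127.1, s128.1]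
  simp only [hminus, hplus]
  simp only [Pi.add_apply, Pi.sub_apply, eu_apply, nf_m1_0, nf_0_m1, nf_m1_1, nf_1_m1, nf_m1_2, nf_2_m1, nf_0_1, nf_1_0, nf_0_2, nf_2_0, nf_1_2, nf_2_1,
    eq_self_iff_true, if_true, if_false, add_zero, sub_zero]
  rw [show α - eu n i + eu n (i + 1) - eu n (i - 1) + eu n i - eu n (i + 1) + eu n (i + 2) - eu n (i - 1) + eu n i = α + eu n (i + 1) + eu n (i + 2) + eu n i + eu n i - eu n (i + 1) - eu n (i - 1) - eu n (i - 1) - eu n i from by abel,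
    show α - eu n (i - 1) + eu n i - eu n i + eu n (i + 1) - eu n (i + 1) + eu n (i + 2) - eu n (i - 1) + eu n i = α + eu n (i + 1) + eu n (i + 2) + eu n i + eu n i - eu n (i + 1) - eu n (i - 1) - eu n (i - 1) - eu n i from by abel,
    show α - eu n (i + 1) + eu n (i + 2) - eu n i + eu n (i + 1) - eu n (i - 1) + eu n i - eu n (i - 1) + eu n i = α + eu n (i + 1) + eu n (i + 2) + eu n i + eu n i - eu n (i + 1) - eu n (i - 1) - eu n (i - 1) - eu n i from by abel,
    show α - eu n (i + 1) + eu n (i + 2) - eu n (i - 1) + eu n i - eu n i + eu n (i + 1) - eu n (i - 1) + eu n i = α + eu n (i + 1) + eu n (i + 2) + eu n i + eu n i - eu n (i + 1) - eu n (i - 1) - eu n (i - 1) - eu n i from by abel,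
    show α - eu n (i - 1) + eu n i - eu n i + eu n (i + 1) - eu n (i - 1) + eu n i - eu n (i + 1) + eu n (i + 2) = α + eu n (i + 1) + eu n (i + 2) + eu n i + eu n i - eu n (i + 1) - eu n (i - 1) - eu n (i - 1) - eu n i from by abel,
    show α - eu n (i - 1) + eu n i - eu n (i - 1) + eu n i - eu n i + eu n (i + 1) - eu n (i + 1) + eu n (i + 2) = α + eu n (i + 1) + eu n (i + 2) + eu n i + eu n i - eu n (i + 1) - eu n (i - 1) - eu n (i - 1) - eu n i from by abel,
    show α - eu n (i - 1) + eu n i - eu n (i + 1) + eu n (i + 2) - eu n i + eu n (i + 1) - eu n (i - 1) + eu n i = α + eu n (i + 1) + eu n (i + 2) + eu n i + eu n i - eu n (i + 1) - eu n (i - 1) - eu n (i - 1) - eu n i from by abel,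
    show α - eu n (i - 1) + eu n i - eu n (i + 1) + eu n (i + 2) - eu n (i - 1) + eu n i - eu n i + eu n (i + 1) = α + eu n (i + 1) + eu n (i + 2) + eu n i + eu n i - eu n (i + 1) - eu n (i - 1) - eu n (i - 1) - eu n i from by abel]
  simp only [smul_add, smul_smul, ← add_smul]
  apply smulCong
  rw [hm2]
  trans qq ^ (α i - α (i + 1)) * ((if i = 0 then x else 1) * (if i - 1 = 0 then x else 1) * (if i - 1 = 0 then x else 1) * (if i + 1 = 0 then x else 1)) * (qint (α (i - 1)) * qint (α (i - 1) - 1)) * ((qint (α (i + 1) + 1) - qq⁻¹ * qint (α (i + 1))) * (qint (α i) - qq⁻¹ * qint (α i + 1)))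
  · ring
  trans qq ^ (α i + 1 - α (i + 1)) * ((if i = 0 then x else 1) * (if i - 1 = 0 then x else 1) * (if i - 1 = 0 then x else 1) * (if i + 1 = 0 then x else 1)) * (qint (α (i - 1)) * qint (α (i - 1) - 1)) * ((qint (α (i + 1) + 1) - qq⁻¹ * qint (α (i + 1))) * (qint (α i + 1) - qq⁻¹ * qint (α i + 1 + 1)))
  · rw [LA (α (i + 1)), LB (α i), LB (α i + 1)]
    trans qq ^ (α i - α (i + 1)) * (qq ^ (α (i + 1)) * (qq ^ (-(α i) - 1) * (-(((if i = 0 then x else 1) * (if i - 1 = 0 then x else 1) * (if i - 1 = 0 then x else 1) * (if i + 1 = 0 then x else 1)) * (qint (α (i - 1)) * qint (α (i - 1) - 1))))))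
    · ring
    trans qq ^ (α i + 1 - α (i + 1)) * (qq ^ (α (i + 1)) * (qq ^ (-(α i + 1) - 1) * (-(((if i = 0 then x else 1) * (if i - 1 = 0 then x else 1) * (if i - 1 = 0 then x else 1) * (if i + 1 = 0 then x else 1)) * (qint (α (i - 1)) * qint (α (i - 1) - 1))))))
    · exact midQ3 _ _ _ _ _ _ (by ring) _
    · ring
  · ring

/-- For every i ∈ ℤ/2n and every γ_i, the operator identities
e_{i±1} b_i = b_i e_{i±1} hold on V_{l,x} and on V^*_{l,x}. -/
theorem statement1 (n l : ℕ) [NeZero n] (hn : 2 ≤ n) (hl : 1 ≤ l) (x : F) (hx : x ≠ 0)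
    (γ : Zn n → F) (i : Zn n) :
    eOp n l x (i + 1) ∘ₗ bOp n l x γ i = bOp n l x γ i ∘ₗ eOp n l x (i + 1)
  ∧ eOp n l x (i - 1) ∘ₗ bOp n l x γ i = bOp n l x γ i ∘ₗ eOp n l x (i - 1)
  ∧ eSOp n l x (i + 1) ∘ₗ bSOp n l x γ i = bSOp n l x γ i ∘ₗ eSOp n l x (i + 1)
  ∧ eSOp n l x (i - 1) ∘ₗ bSOp n l x γ i = bSOp n l x γ i ∘ₗ eSOp n l x (i - 1) := by
  exact ⟨commP1 n l hn x γ i, commP2 n l hn x γ i, commS1 n l hn x γ i, commS2 n l hn x γ i⟩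

end AII
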